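/- Let d ≥ 2, let B be a finite set with |B| = k ≥ 1, let M : B → Matrix (Fin d) (Fin d) ℂ be a POVM (each M_b positive semidefinite, ∑_b M_b = 1) such that every M_b has rank at most one and Tr(M_b) = d/k, let Λ be a finite set, let D : Λ → B → ℝ with ∑_{b∈B} D_λ(b) = 1 for every λ, and let Λ₀ ∈ ℝ be such that Λ₀ • 1 − ∑_b D_λ(b) • M_b is positive semidefinite for every λ. If η ∈ ℝ with η ≤ 1 and there exist positive semidefinite matrices G_λ with ∑_λ D_λ(b) • G_λ = η • M_b + (1−η) • (Tr(M_b)/d) • 1 for every b, then η ≤ (k·Λ₀ − 1)/(d − 1). -/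

import Mathlib

open Matrix BigOperators
open scoped ComplexOrder

noncomputable section

lemma aux_trace_nonneg {n : Type*} [Fintype n] {A : Matrix n n ℂ}
    (hA : A.PosSemidef) : 0 ≤ A.trace := by
  classical
  have h : ∀ i, 0 ≤ A i i := fun i => by
    exact hA.diag_nonneg
  exact Finset.sum_nonneg fun i _ => h i

open scoped MatrixOrder in
lemma aux_trace_mul_nonneg {n : Type*} [Fintype n] [DecidableEq n]
    {A Bm : Matrix n n ℂ} (hA : A.PosSemidef) (hB : Bm.PosSemidef) :
    0 ≤ (A * Bm).trace := by
  have hS : (CFC.sqrt A)ᴴ = CFC.sqrt A := (CFC.sqrt_nonneg A).posSemidef.1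
  have h1 : (CFC.sqrt A * Bm * (CFC.sqrt A)ᴴ).PosSemidef := hB.mul_mul_conjTranspose_same (CFC.sqrt A)
  rw [hS] at h1
  have h2 : (CFC.sqrt A * Bm * CFC.sqrt A).trace = (A * Bm).trace := by
    rw [Matrix.trace_mul_cycle, ← pow_two, CFC.sq_sqrt A hA.nonneg]
  rw [← h2]
  exact aux_trace_nonneg h1

lemma aux_rank_one_trace_sq {n : Type*} [Fintype n] [DecidableEq n]
    {A : Matrix n n ℂ} (hA : A.PosSemidef) (hr : A.rank ≤ 1) :
    (A * A).trace = A.trace ^ 2 := by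
  classical
  have hH := hA.1
  set U : Matrix n n ℂ := (hH.eigenvectorUnitary : Matrix n n ℂ) with hU
  set ev : n → ℝ := hH.eigenvalues with hev
  have hVU : star U * U = 1 :=
    (Matrix.mem_unitaryGroup_iff').mp hH.eigenvectorUnitary.2
  have hspec : A = U * Matrix.diagonal (Complex.ofReal ∘ ev) * star U :=
    hH.spectral_theorem
  have h1 : A.trace = ∑ i, (ev i : ℂ) := by
    conv_lhs => rw [hspec]
    rw [Matrix.trace_mul_cycle, hVU, one_mul, Matrix.trace_diagonal]
    rfl
  have hAA : A * A = U * (Matrix.diagonal (Complex.ofReal ∘ ev) *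
      Matrix.diagonal (Complex.ofReal ∘ ev)) * star U := by
    conv_lhs => rw [hspec]
    simp only [Matrix.mul_assoc]
    rw [← Matrix.mul_assoc (star U) U, hVU, one_mul]
  have h2 : (A * A).trace = ∑ i, (ev i : ℂ) ^ 2 := by
    rw [hAA, Matrix.trace_mul_cycle, hVU, one_mul,
      Matrix.diagonal_mul_diagonal, Matrix.trace_diagonal]
    simp [pow_two]
  have hcross : ∀ i j : n, i ≠ j → ev i * ev j = 0 := by
    intro i j hij
    by_contra hc
    have hi : ev i ≠ 0 := fun h => hc (by rw [h, zero_mul])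
    have hj : ev j ≠ 0 := fun h => hc (by rw [h, mul_zero])
    have hcard : Fintype.card {i // ev i ≠ 0} ≤ 1 := by
      rw [← hH.rank_eq_card_non_zero_eigs] at *
      exact hr
    have := Fintype.card_le_one_iff.mp hcard ⟨i, hi⟩ ⟨j, hj⟩
    exact hij (congrArg Subtype.val this)
  rw [h1, h2, pow_two, Finset.sum_mul_sum]
  refine Finset.sum_congr rfl fun i _ => ?_
  have hs : ∑ j, (ev i : ℂ) * (ev j : ℂ) = (ev i : ℂ) * (ev i : ℂ) := by
    apply Finset.sum_eq_single
    · intro j _ hji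
      have h0 : ev i * ev j = 0 := hcross i j (Ne.symm hji)
      have h0' := congrArg (Complex.ofReal) h0
      push_cast at h0'
      simpa using h0'
    · intro h; exact absurd (Finset.mem_univ i) h
  rw [hs, pow_two]


theorem rank_one_upper_bound_white_noise_robustness
    {d : ℕ} (hd : 2 ≤ d) {B Λ : Type*} [Fintype B] [Fintype Λ]
    (k : ℕ) (hk : 1 ≤ k) (hcard : Fintype.card B = k)
    (M : B → Matrix (Fin d) (Fin d) ℂ)
    (hMpsd : ∀ b, (M b).PosSemidef)
    (hMnorm : ∑ b : B, M b = 1)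
    (hrank : ∀ b, (M b).rank ≤ 1)
    (htrace : ∀ b, (M b).trace = (d : ℂ) / (k : ℂ))
    (D : Λ → B → ℝ)
    (hDnorm : ∀ l, ∑ b : B, D l b = 1)
    (Λ₀ : ℝ)
    (hΛ₀ : ∀ l : Λ,
      (Λ₀ • (1 : Matrix (Fin d) (Fin d) ℂ) - ∑ b : B, D l b • M b).PosSemidef)
    (η : ℝ) (hη : η ≤ 1)
    (G : Λ → Matrix (Fin d) (Fin d) ℂ)
    (hGpsd : ∀ l, (G l).PosSemidef)
    (hdecomp : ∀ b : B, ∑ l : Λ, D l b • G l =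
      η • M b + (1 - η) • (((M b).trace / (d : ℂ)) • (1 : Matrix (Fin d) (Fin d) ℂ))) :
    η ≤ ((k : ℝ) * Λ₀ - 1) / ((d : ℝ) - 1) := by
  have hd0 : (0:ℝ) < d := by positivity
  have hk0 : (0:ℝ) < k := by exact_mod_cast hk
  have hdC : (d:ℂ) ≠ 0 := by exact_mod_cast hd0.ne'
  have hkC : (k:ℂ) ≠ 0 := by exact_mod_cast hk0.ne'
  set t : ℂ := (d:ℂ) / (k:ℂ) with ht
  -- Step A : ∑ l, G l = 1
  have hGsum : ∑ l : Λ, G l = 1 := by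
    have h1 : ∑ b : B, ∑ l : Λ, D l b • G l =
        ∑ b : B, (η • M b + (1 - η) • (((M b).trace / (d : ℂ)) • (1 : Matrix (Fin d) (Fin d) ℂ))) :=
      Finset.sum_congr rfl fun b _ => hdecomp b
    rw [Finset.sum_comm] at h1
    have hL : ∑ l : Λ, ∑ b : B, D l b • G l = ∑ l : Λ, G l := by
      refine Finset.sum_congr rfl fun l _ => ?_
      rw [← Finset.sum_smul, hDnorm l, one_smul]
    have hR : ∑ b : B, (η • M b + (1 - η) • (((M b).trace / (d : ℂ)) • (1 : Matrix (Fin d) (Fin d) ℂ)))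
        = (1 : Matrix (Fin d) (Fin d) ℂ) := by
      rw [Finset.sum_add_distrib, ← Finset.smul_sum, hMnorm, ← Finset.smul_sum,
        ← Finset.sum_smul]
      have : ∑ b : B, (M b).trace / (d:ℂ) = 1 := by
        rw [Finset.sum_congr rfl fun b _ => by rw [htrace b]]
        rw [Finset.sum_const, Finset.card_univ, hcard, ht]
        field_simp
        rw [nsmul_eq_mul, mul_one_div_cancel hkC]
      rw [this, one_smul, ← add_smul]
      norm_num
    rw [hL, hR] at h1
    exact h1
  -- Step B : the trace inequality per l, then summed
  have hB : ∀ l : Λ, ((∑ b : B, D l b • M b) * G l).trace ≤ (Λ₀:ℂ) * (G l).trace := by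
    intro l
    have h0 := aux_trace_mul_nonneg (hΛ₀ l) (hGpsd l)
    rw [sub_mul, trace_sub, smul_mul_assoc, one_mul, trace_smul] at h0
    have := sub_nonneg.mp h0
    rwa [Complex.real_smul] at this
  have hBsum : ∑ l : Λ, ((∑ b : B, D l b • M b) * G l).trace ≤ (Λ₀:ℂ) * (d:ℂ) := by
    calc ∑ l : Λ, ((∑ b : B, D l b • M b) * G l).trace
        ≤ ∑ l : Λ, (Λ₀:ℂ) * (G l).trace := Finset.sum_le_sum fun l _ => hB l
      _ = (Λ₀:ℂ) * (∑ l : Λ, G l).trace := by rw [← Finset.mul_sum, trace_sum]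
      _ = (Λ₀:ℂ) * (d:ℂ) := by rw [hGsum, trace_one]; simp
  -- Step C : evaluate the left side
  have hC : ∑ l : Λ, ((∑ b : B, D l b • M b) * G l).trace
      = (k:ℂ) * ((η:ℂ) * t^2 + ((1:ℂ) - η) * (t / d * t)) := by
    have hswap : ∑ l : Λ, ((∑ b : B, D l b • M b) * G l).trace
        = ∑ b : B, (M b * (∑ l : Λ, D l b • G l)).trace := by
      have h1 : ∀ l, ((∑ b : B, D l b • M b) * G l).trace
          = ∑ b : B, D l b • (M b * G l).trace := by
        intro l
        rw [Finset.sum_mul, trace_sum]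
        exact Finset.sum_congr rfl fun b _ => by rw [smul_mul_assoc, trace_smul]
      have h2 : ∀ b, (M b * (∑ l : Λ, D l b • G l)).trace
          = ∑ l : Λ, D l b • (M b * G l).trace := by
        intro b
        rw [Finset.mul_sum, trace_sum]
        exact Finset.sum_congr rfl fun l _ => by rw [mul_smul_comm, trace_smul]
      rw [Finset.sum_congr rfl fun l _ => h1 l, Finset.sum_comm,
        Finset.sum_congr rfl fun b _ => (h2 b).symm]
    rw [hswap]
    have hterm : ∀ b : B, (M b * (∑ l : Λ, D l b • G l)).trace
        = (η:ℂ) * t^2 + ((1:ℂ) - η) * (t / d * t) := by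
      intro b
      rw [hdecomp b]
      simp only [mul_add, mul_smul_comm, mul_one, trace_add, trace_smul]
      rw [aux_rank_one_trace_sq (hMpsd b) (hrank b), htrace b]
      simp only [Complex.real_smul, smul_eq_mul, ← ht]
      push_cast
      ring
    rw [Finset.sum_congr rfl fun b _ => hterm b, Finset.sum_const, Finset.card_univ,
      hcard, nsmul_eq_mul]
  -- Step D : conclude
  rw [hC] at hBsum
  rw [ht] at hBsum
  have hre : (k:ℝ) * (η * ((d:ℝ)/(k:ℝ))^2 + (1 - η) * (((d:ℝ)/(k:ℝ))/(d:ℝ) * ((d:ℝ)/(k:ℝ)))) ≤ Λ₀ * d := by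
    rw [← Complex.real_le_real]
    push_cast
    exact hBsum
  have hd2 : (2:ℝ) ≤ (d:ℝ) := by exact_mod_cast hd
  have key : η * (d:ℝ) + (1 - η) ≤ (k:ℝ) * Λ₀ := by
    have h2 : ((d:ℝ)/(k:ℝ)) * (η * (d:ℝ) + (1 - η)) ≤ ((d:ℝ)/(k:ℝ)) * ((k:ℝ) * Λ₀) := by
      calc ((d:ℝ)/(k:ℝ)) * (η * (d:ℝ) + (1 - η))
          = (k:ℝ) * (η * ((d:ℝ)/(k:ℝ))^2 + (1 - η) * (((d:ℝ)/(k:ℝ))/(d:ℝ) * ((d:ℝ)/(k:ℝ)))) := by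
            field_simp
        _ ≤ Λ₀ * d := hre
        _ = ((d:ℝ)/(k:ℝ)) * ((k:ℝ) * Λ₀) := by field_simp
    exact le_of_mul_le_mul_left h2 (by positivity)
  rw [le_div_iff₀ (by linarith : (0:ℝ) < (d:ℝ)-1)]
  linarith
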